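/- Let f : X → Y be a continuous monotone map between Priestley spaces, with dual lattice homomorphism h : ClU(Y) → ClU(X) given by h(V) = f⁻¹(V) on clopen up-sets. Then h has a left adjoint if and only if for every open up-set U of X, the upward closure ↑f[U] is open in Y. Moreover, in that case the left adjoint g satisfies g(U) = ↑f[U] for every clopen up-set U of X. -/
import Mathlib

/-- Separate a compact set from a point outside its upper closure by a clopen up-set. -/
lemma sep_aux5 {Y : Type*} [TopologicalSpace Y] [PartialOrder Y]
    (htod : ∀ x y : Y, ¬x ≤ y → ∃ U : Set Y, IsClopen U ∧ IsUpperSet U ∧ x ∈ U ∧ y ∉ U)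
    {K : Set Y} (hK : IsCompact K) {y : Y} (hy : y ∉ (upperClosure K : Set Y)) :
    ∃ W : Set Y, IsClopen W ∧ IsUpperSet W ∧ K ⊆ W ∧ y ∉ W := by
  have hsep : ∀ z : K, ∃ W : Set Y, IsClopen W ∧ IsUpperSet W ∧ (z : Y) ∈ W ∧ y ∉ W := by
    intro z
    apply htod
    intro hle
    exact hy ⟨z, z.2, hle⟩
  choose W hWc hWu hWz hWy using hsep
  have hcov : K ⊆ ⋃ z : K, W z := fun z hz => Set.mem_iUnion.2 ⟨⟨z, hz⟩, hWz _⟩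
  obtain ⟨t, ht⟩ := hK.elim_finite_subcover W (fun z => (hWc z).isOpen) hcov
  refine ⟨⋃ z ∈ t, W z, ?_, ?_, ht, ?_⟩
  · exact Set.Finite.isClopen_biUnion t.finite_toSet (fun z _ => hWc z)
  · exact isUpperSet_iUnion₂ fun z _ => hWu z
  · simp only [Set.mem_iUnion]
    rintro ⟨z, _, hz⟩
    exact hWy z hz

/-- The upper closure of a compact set is closed. -/
lemma upperClosure_isClosed_aux5 {Y : Type*} [TopologicalSpace Y] [PartialOrder Y]
    (htod : ∀ x y : Y, ¬x ≤ y → ∃ U : Set Y, IsClopen U ∧ IsUpperSet U ∧ x ∈ U ∧ y ∉ U)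
    {K : Set Y} (hK : IsCompact K) : IsClosed (upperClosure K : Set Y) := by
  rw [← isOpen_compl_iff]
  rw [isOpen_iff_forall_mem_open]
  intro y hy
  obtain ⟨W, hWc, hWu, hKW, hyW⟩ := sep_aux5 htod hK hy
  refine ⟨Wᶜ, ?_, hWc.compl.isOpen, hyW⟩
  intro z hz hz'
  obtain ⟨a, haK, hale⟩ := hz'
  exact hz (hWu hale (hKW haK))

/-- Every point of an open up-set has a clopen up-set neighborhood inside it. -/
lemma clopen_nbhd_aux5 {X : Type*} [TopologicalSpace X] [PartialOrder X] [CompactSpace X]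
    (htod : ∀ x y : X, ¬x ≤ y → ∃ U : Set X, IsClopen U ∧ IsUpperSet U ∧ x ∈ U ∧ y ∉ U)
    {U : Set X} (hU : IsOpen U) (hUu : IsUpperSet U) {x : X} (hx : x ∈ U) :
    ∃ C : Set X, IsClopen C ∧ IsUpperSet C ∧ x ∈ C ∧ C ⊆ U := by
  have hcomp : IsCompact Uᶜ := hU.isClosed_compl.isCompact
  have hsep : ∀ z : ↥(Uᶜ), ∃ W : Set X, IsClopen W ∧ IsUpperSet W ∧ x ∈ W ∧ (z : X) ∉ W := by
    intro z
    apply htod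
    intro hle
    exact z.2 (hUu hle hx)
  choose W hWc hWu hWx hWz using hsep
  have hcov : Uᶜ ⊆ ⋃ z : ↥(Uᶜ), (W z)ᶜ := fun z hz => Set.mem_iUnion.2 ⟨⟨z, hz⟩, hWz _⟩
  obtain ⟨t, ht⟩ := hcomp.elim_finite_subcover _ (fun z => (hWc z).compl.isOpen) hcov
  refine ⟨⋂ z ∈ t, W z, ?_, ?_, ?_, ?_⟩
  · exact Set.Finite.isClopen_biInter t.finite_toSet fun z _ => hWc z
  · exact isUpperSet_iInter₂ fun z _ => hWu z
  · exact Set.mem_iInter₂.2 fun z _ => hWx z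
  · intro a ha
    by_contra hna
    obtain ⟨z, hzt, hz⟩ := Set.mem_iUnion₂.1 (ht hna)
    exact hz (Set.mem_iInter₂.1 ha z hzt)

/-- Let `f : X → Y` be a continuous monotone map between Priestley spaces
and `h : ClU(Y) → ClU(X)`, `h V = f⁻¹ V`, the dual homomorphism on clopen up-sets. Then `h`
has a left adjoint iff for every open up-set `U ⊆ X` the set `↑f[U]` is open in `Y`; and in
that case any left adjoint `g` satisfies `g U = ↑f[U]` for every clopen up-set `U` of `X`. -/
theorem stmt_5 {X Y : Type*} [TopologicalSpace X] [PartialOrder X] [CompactSpace X]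
    [TopologicalSpace Y] [PartialOrder Y] [CompactSpace Y]
    (htodX : ∀ x y : X, ¬x ≤ y → ∃ U : Set X, IsClopen U ∧ IsUpperSet U ∧ x ∈ U ∧ y ∉ U)
    (htodY : ∀ x y : Y, ¬x ≤ y → ∃ U : Set Y, IsClopen U ∧ IsUpperSet U ∧ x ∈ U ∧ y ∉ U)
    (f : X → Y) (hfc : Continuous f) (hfm : Monotone f)
    (h : {V : Set Y // IsClopen V ∧ IsUpperSet V} → {U : Set X // IsClopen U ∧ IsUpperSet U})
    (hh : ∀ V, (h V).1 = f ⁻¹' V.1) :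
    ((∃ g : {U : Set X // IsClopen U ∧ IsUpperSet U} →
          {V : Set Y // IsClopen V ∧ IsUpperSet V}, GaloisConnection g h) ↔
        ∀ U : Set X, IsOpen U → IsUpperSet U →
          IsOpen (↑(upperClosure (f '' U)) : Set Y)) ∧
      ∀ g : {U : Set X // IsClopen U ∧ IsUpperSet U} →
          {V : Set Y // IsClopen V ∧ IsUpperSet V}, GaloisConnection g h →
        ∀ U, (g U).1 = ↑(upperClosure (f '' U.1)) := by
  -- Part 2: any left adjoint is given by the upper closure of the image.
  have key : ∀ g : {U : Set X // IsClopen U ∧ IsUpperSet U} →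
      {V : Set Y // IsClopen V ∧ IsUpperSet V}, GaloisConnection g h →
      ∀ U, (g U).1 = ↑(upperClosure (f '' U.1)) := by
    intro g hg U
    have hUc : IsCompact (f '' U.1) := (U.2.1.isClosed.isCompact).image hfc
    apply Set.Subset.antisymm
    · intro y hy
      by_contra hny
      obtain ⟨W, hWc, hWu, hKW, hyW⟩ := sep_aux5 htodY hUc hny
      have hle : g U ≤ ⟨W, hWc, hWu⟩ := by
        apply hg.l_le
        show U.1 ≤ (h ⟨W, hWc, hWu⟩).1
        rw [hh]
        intro x hx
        exact hKW ⟨x, hx, rfl⟩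
      exact hyW (hle hy)
    · have h2 : U.1 ⊆ f ⁻¹' (g U).1 := by
        rw [← hh]
        exact hg.le_u_l U
      intro y hy
      obtain ⟨z, ⟨x, hxU, rfl⟩, hle⟩ := hy
      exact (g U).2.2 hle (h2 hxU)
  refine ⟨⟨?_, ?_⟩, key⟩
  · -- existence of a left adjoint implies openness of upper closures of images of open up-sets
    rintro ⟨g, hg⟩ U hUo hUu
    choose C hCc hCu hCx hCsub using fun x : U => clopen_nbhd_aux5 htodX hUo hUu x.2
    have heq : (↑(upperClosure (f '' U)) : Set Y) =
        ⋃ x : U, (↑(upperClosure (f '' C x)) : Set Y) := by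
      ext y
      constructor
      · rintro ⟨z, ⟨x, hxU, rfl⟩, hle⟩
        exact Set.mem_iUnion.2 ⟨⟨x, hxU⟩, ⟨f x, ⟨x, hCx ⟨x, hxU⟩, rfl⟩, hle⟩⟩
      · intro hy
        obtain ⟨x, hy⟩ := Set.mem_iUnion.1 hy
        obtain ⟨z, ⟨a, haC, rfl⟩, hle⟩ := hy
        exact ⟨f a, ⟨a, hCsub x haC, rfl⟩, hle⟩
    rw [heq]
    apply isOpen_iUnion
    intro x
    rw [← key g hg ⟨C x, hCc x, hCu x⟩]
    exact (g _).2.1.isOpen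
  · -- the openness condition implies the existence of a left adjoint
    intro hcond
    refine ⟨fun U => ⟨↑(upperClosure (f '' U.1)),
      ⟨upperClosure_isClosed_aux5 htodY ((U.2.1.isClosed.isCompact).image hfc),
        hcond U.1 U.2.1.isOpen U.2.2⟩, (upperClosure (f '' U.1)).upper⟩, ?_⟩
    intro U V
    show (↑(upperClosure (f '' U.1)) : Set Y) ≤ V.1 ↔ U.1 ≤ (h V).1
    rw [hh]
    constructor
    · intro hsub x hx
      exact hsub ⟨f x, ⟨x, hx, rfl⟩, le_refl _⟩
    · intro hsub y hy
      obtain ⟨z, ⟨x, hx, rfl⟩, hle⟩ := hy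
      exact V.2.2 hle (hsub hx)
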